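/- arXiv:0805.0006 — 3 statements merged into one kernel-verified Lean document; each statement's English description precedes it below -/
import Mathlib

section
/- Let G be a finite group whose order is a power of 2, and let ρ : G → GL(ℂ³) be a group homomorphism (a linear action of G on ℂ³). Then the induced action of G on the projective plane ℙ² = ℙ(ℂ³) has a fixed point: there exists a point p of the projectivization of ℂ³ such that for every g ∈ G, the projective transformation induced by ρ(g) maps p to itself. -/
open scoped LinearAlgebra.Projectivization

/-- A finite 2-group acting linearly on `ℂ³` has a common eigenvector. -/
theorem common_eigenvector_aux (G : Type) [Group G] [Fintype G] (r : ℕ)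
    (hG : Fintype.card G = 2 ^ r)
    (ρ : G →* ((Fin 3 → ℂ) ≃ₗ[ℂ] (Fin 3 → ℂ))) :
    ∃ v : Fin 3 → ℂ, v ≠ 0 ∧ ∀ g : G, ∃ c : ℂ, ρ g v = c • v := by
  classical
  have hmul : ∀ a b : G, ∀ u : Fin 3 → ℂ, ρ (a * b) u = ρ a (ρ b u) := by
    intro a b u; rw [map_mul]; rfl
  have hone : ((fun _ => 1 : Fin 3 → ℂ)) ≠ 0 := by
    intro h
    have := congrFun h 0
    simp at this
  by_cases hsc : ∀ g : G, ∃ c : ℂ, ∀ w : Fin 3 → ℂ, ρ g w = c • w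
  · refine ⟨fun _ => 1, hone, fun g => ?_⟩
    obtain ⟨c, hc⟩ := hsc g
    exact ⟨c, hc _⟩
  -- N = elements acting by scalars
  · set N : Subgroup G :=
      { carrier := {g | ∃ c : ℂ, ∀ w : Fin 3 → ℂ, ρ g w = c • w}
        one_mem' := ⟨1, by intro w; simp⟩
        mul_mem' := by
          rintro a b ⟨c, hc⟩ ⟨d, hd⟩
          refine ⟨d * c, fun w => ?_⟩
          rw [hmul, hd, map_smul, hc, smul_smul]
        inv_mem' := by
          rintro a ⟨c, hc⟩
          have hc0 : c ≠ 0 := by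
            intro h0
            have := hc (fun _ => 1)
            rw [h0, zero_smul] at this
            exact hone ((ρ a).map_eq_zero_iff.mp this ▸ rfl)
          refine ⟨c⁻¹, fun w => ?_⟩
          have h1 : ρ a (c⁻¹ • w) = w := by
            rw [hc, smul_smul, mul_inv_cancel₀ hc0, one_smul]
          have h2 : ρ a⁻¹ (ρ a (c⁻¹ • w)) = c⁻¹ • w := by
            rw [← hmul, inv_mul_cancel, map_one]; rfl
          rw [← h2, h1] } with hNdef
    have hNmem : ∀ g : G, g ∈ N ↔ ∃ c : ℂ, ∀ w : Fin 3 → ℂ, ρ g w = c • w :=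
      fun g => Iff.rfl
    haveI : N.Normal := by
      constructor
      rintro a ⟨c, hc⟩ k
      refine ⟨c, fun w => ?_⟩
      rw [hmul, hmul, hc, map_smul]
      congr 1
      rw [← hmul, mul_inv_cancel, map_one]; rfl
    haveI : Fact (Nat.Prime 2) := ⟨by norm_num⟩
    have hPG : IsPGroup 2 G := IsPGroup.of_card (by rw [Nat.card_eq_fintype_card, hG])
    have hPQ : IsPGroup 2 (G ⧸ N) := hPG.to_quotient N
    push_neg at hsc
    obtain ⟨g₀, hg₀⟩ := hsc
    have hg₀N : g₀ ∉ N := by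
      rintro ⟨c, hc⟩
      obtain ⟨w, hw⟩ := hg₀ c
      exact hw (hc w)
    haveI : Nontrivial (G ⧸ N) := by
      refine ⟨⟨(g₀ : G ⧸ N), 1, ?_⟩⟩
      intro h
      exact hg₀N ((QuotientGroup.eq_one_iff g₀).mp h)
    haveI : Finite (G ⧸ N) := Quotient.finite _
    haveI := hPQ.center_nontrivial
    obtain ⟨z, hz1⟩ := exists_ne (1 : Subgroup.center (G ⧸ N))
    obtain ⟨h, hh⟩ := QuotientGroup.mk_surjective (z : G ⧸ N)
    have hhN : h ∉ N := by
      intro hmem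
      apply hz1
      apply Subtype.ext
      rw [← hh, show ((1 : Subgroup.center (G ⧸ N)) : G ⧸ N) = 1 from rfl]
      exact (QuotientGroup.eq_one_iff h).mpr hmem
    -- every ρ k commutes with ρ h
    have hcomm : ∀ k : G, ∀ w : Fin 3 → ℂ, ρ k (ρ h w) = ρ h (ρ k w) := by
      intro k
      have hzc : ((k : G ⧸ N)) * ((h : G ⧸ N)) = ((h : G ⧸ N)) * ((k : G ⧸ N)) := by
        rw [hh]
        exact Subgroup.mem_center_iff.mp z.2 _
      have hmem : (k * h)⁻¹ * (h * k) ∈ N := by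
        rw [← QuotientGroup.eq, QuotientGroup.mk_mul, QuotientGroup.mk_mul, hzc]
      obtain ⟨c, hc⟩ := hmem
      set e : G := (k * h)⁻¹ * (h * k) with he
      -- key scalar-commutation relation
      have key : ∀ w : Fin 3 → ℂ, ρ h (ρ k w) = c • ρ k (ρ h w) := by
        intro w
        have h4 : ρ (e * (h * k)⁻¹) (ρ h (ρ k w))
            = c • ρ (h * k)⁻¹ (ρ h (ρ k w)) := by
          rw [hmul]; exact hc _
        have h5 : e * (h * k)⁻¹ = (k * h)⁻¹ := by rw [he]; group
        rw [h5] at h4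
        have h6 := congrArg (ρ (k * h)) h4
        rw [map_smul] at h6
        have h7 : ρ (k * h) (ρ (k * h)⁻¹ (ρ h (ρ k w))) = ρ h (ρ k w) := by
          rw [← hmul, mul_inv_cancel, map_one]; rfl
        have h8 : ρ (k * h) (ρ (h * k)⁻¹ (ρ h (ρ k w)))
            = ρ (k * h * (h * k)⁻¹) (ρ h (ρ k w)) := (hmul _ _ _).symm
        rw [h7, h8] at h6
        have h9 : ρ (k * h * (h * k)⁻¹) (ρ h (ρ k w))
            = ρ k (ρ (h * (h * k)⁻¹ * h * k) w) := by
          rw [← hmul, ← hmul, ← hmul]; congr 1; group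
        have h10 : h * (h * k)⁻¹ * h * k = h := by group
        rw [h9, h10, ← hmul] at h6
        rw [hmul] at h6
        exact h6
      -- c ^ (2^r) = 1
      have hpow : ∀ n : ℕ, ∀ w : Fin 3 → ℂ, ρ (e ^ n) w = c ^ n • w := by
        intro n
        induction n with
        | zero => intro w; simp
        | succ n ih =>
          intro w
          rw [pow_succ, hmul, hc, map_smul, ih, smul_smul, pow_succ, mul_comm]
      have hcr : c ^ 2 ^ r = 1 := by
        have he1 : e ^ 2 ^ r = 1 := by rw [← hG]; exact pow_card_eq_one
        have h1 : ρ (e ^ 2 ^ r) (fun _ => 1) = c ^ 2 ^ r • (fun _ => 1 : Fin 3 → ℂ) :=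
          hpow _ _
        rw [he1, map_one] at h1
        have h2 := congrFun h1 0
        simpa using h2.symm
      -- c ^ 3 = 1 via determinants
      have hc3 : c ^ 3 = 1 := by
        have hAB : ((ρ h).toLinearMap ∘ₗ (ρ k).toLinearMap : Module.End ℂ (Fin 3 → ℂ))
            = c • ((ρ k).toLinearMap ∘ₗ (ρ h).toLinearMap) := by
          apply LinearMap.ext
          intro w
          simpa using key w
        have hdet := congrArg LinearMap.det hAB
        rw [LinearMap.det_comp, LinearMap.det_smul, LinearMap.det_comp,
          Module.finrank_fin_fun] at hdet
        have h0 : (LinearMap.det ((ρ k).toLinearMap) * LinearMap.det ((ρ h).toLinearMap)) ≠ 0 :=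
          (((ρ k).isUnit_det').mul ((ρ h).isUnit_det')).ne_zero
        rw [mul_comm (LinearMap.det ((ρ h).toLinearMap))] at hdet
        have : (1 : ℂ) * (LinearMap.det ((ρ k).toLinearMap) * LinearMap.det ((ρ h).toLinearMap))
            = c ^ 3 * (LinearMap.det ((ρ k).toLinearMap) * LinearMap.det ((ρ h).toLinearMap)) := by
          rw [one_mul]; exact hdet
        exact (mul_right_cancel₀ h0 this).symm
      -- c = 1
      have hc1 : c = 1 := by
        have hd3 : orderOf c ∣ 3 := orderOf_dvd_of_pow_eq_one hc3
        have hd2 : orderOf c ∣ 2 ^ r := orderOf_dvd_of_pow_eq_one hcr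
        have hcop : Nat.Coprime 3 (2 ^ r) :=
          Nat.Coprime.pow_right r (by norm_num)
        have hdg : orderOf c ∣ Nat.gcd 3 (2 ^ r) := Nat.dvd_gcd hd3 hd2
        rw [Nat.Coprime] at hcop
        rw [hcop, Nat.dvd_one] at hdg
        exact orderOf_eq_one_iff.mp hdg
      intro w
      rw [key w, hc1, one_smul]
    -- now build an invariant line from f := ρ h
    set f : Module.End ℂ (Fin 3 → ℂ) := (ρ h).toLinearMap with hfdef
    obtain ⟨μ, hμ⟩ := Module.End.exists_eigenvalue f
    set g' : Module.End ℂ (Fin 3 → ℂ) := f - μ • 1 with hg'def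
    have hg'apply : ∀ x, g' x = f x - μ • x := by
      intro x; simp [hg'def]
    -- a common setup: L an invariant line
    have hker_comm : ∀ k : G, ∀ x, x ∈ LinearMap.ker g' → ρ k x ∈ LinearMap.ker g' := by
      intro k x hx
      rw [LinearMap.mem_ker] at hx ⊢
      rw [hg'apply] at hx ⊢
      have hfk : f ((ρ k) x) = (ρ k) (f x) := by
        simp only [hfdef, LinearEquiv.coe_coe]
        exact (hcomm k x).symm
      rw [hfk, ← map_smul, ← map_sub, hx, map_zero]
    have hrange_comm : ∀ k : G, ∀ x, x ∈ LinearMap.range g' → ρ k x ∈ LinearMap.range g' := by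
      intro k x hx
      obtain ⟨y, rfl⟩ := hx
      refine ⟨ρ k y, ?_⟩
      rw [hg'apply, hg'apply]
      rw [map_sub, map_smul]
      congr 1
      have hfk : f ((ρ k) y) = (ρ k) (f y) := by
        simp only [hfdef, LinearEquiv.coe_coe]
        exact (hcomm k y).symm
      exact hfk
    -- the kernel is nontrivial
    obtain ⟨v₀, hv₀⟩ := hμ.exists_hasEigenvector
    have hv₀ker : v₀ ∈ LinearMap.ker g' := by
      rw [LinearMap.mem_ker, hg'apply, sub_eq_zero]
      exact hv₀.apply_eq_smul
    have hkerne : LinearMap.ker g' ≠ ⊥ := by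
      intro hbot
      rw [hbot, Submodule.mem_bot] at hv₀ker
      exact hv₀.2 hv₀ker
    -- kernel is not everything, since h is not scalar
    have hkernt : LinearMap.ker g' ≠ ⊤ := by
      intro htop
      apply hhN
      refine ⟨μ, fun w => ?_⟩
      have hw : w ∈ LinearMap.ker g' := htop ▸ Submodule.mem_top
      rw [LinearMap.mem_ker, hg'apply, sub_eq_zero] at hw
      exact hw
    have hrank : Module.finrank ℂ (LinearMap.range g')
        + Module.finrank ℂ (LinearMap.ker g') = 3 := by
      rw [LinearMap.finrank_range_add_finrank_ker g', Module.finrank_fin_fun]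
    have hker_pos : 1 ≤ Module.finrank ℂ (LinearMap.ker g') := by
      rcases Nat.eq_zero_or_pos (Module.finrank ℂ (LinearMap.ker g')) with h0 | h0
      · exact absurd (Submodule.finrank_eq_zero.mp h0) hkerne
      · exact h0
    have hker_lt : Module.finrank ℂ (LinearMap.ker g') < 3 := by
      rcases lt_or_ge (Module.finrank ℂ (LinearMap.ker g')) 3 with hlt | hge
      · exact hlt
      · exfalso
        apply hkernt
        apply Submodule.eq_top_of_finrank_eq
        have hle : Module.finrank ℂ (LinearMap.ker g') ≤ Module.finrank ℂ (Fin 3 → ℂ) :=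
          Submodule.finrank_le _
        rw [Module.finrank_fin_fun] at hle ⊢
        omega
    -- pick the invariant line L
    obtain ⟨L, hL1, hLinv⟩ :
        ∃ L : Submodule ℂ (Fin 3 → ℂ), Module.finrank ℂ L = 1 ∧
          ∀ k : G, ∀ x, x ∈ L → ρ k x ∈ L := by
      rcases Nat.lt_or_ge (Module.finrank ℂ (LinearMap.ker g')) 2 with h1 | h2
      · exact ⟨LinearMap.ker g', by omega, hker_comm⟩
      · refine ⟨LinearMap.range g', by omega, hrange_comm⟩
    -- extract a common eigenvector from L
    have hLne : L ≠ ⊥ := by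
      intro hbot
      rw [hbot, finrank_bot] at hL1
      exact one_ne_zero hL1.symm
    obtain ⟨v, hvL, hv0⟩ := Submodule.exists_mem_ne_zero_of_ne_bot hLne
    have hspan : Submodule.span ℂ {v} = L := by
      apply Submodule.eq_of_le_of_finrank_eq
      · rw [Submodule.span_le, Set.singleton_subset_iff]; exact hvL
      · rw [finrank_span_singleton hv0, hL1]
    refine ⟨v, hv0, fun g => ?_⟩
    have : ρ g v ∈ Submodule.span ℂ {v} := hspan ▸ hLinv g v hvL
    obtain ⟨a, ha⟩ := Submodule.mem_span_singleton.mp this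
    exact ⟨a, ha.symm⟩

/-- A finite group of 2-power order acting linearly on `ℂ³` has a fixed point on the
projective plane `ℙ(ℂ³)`. -/
theorem fixed_point_on_P2 (G : Type) [Group G] [Fintype G] (r : ℕ)
    (hG : Fintype.card G = 2 ^ r)
    (ρ : G →* ((Fin 3 → ℂ) ≃ₗ[ℂ] (Fin 3 → ℂ))) :
    ∃ p : ℙ ℂ (Fin 3 → ℂ), ∀ g : G,
      Projectivization.map ((ρ g : (Fin 3 → ℂ) ≃ₗ[ℂ] (Fin 3 → ℂ)) :
          (Fin 3 → ℂ) →ₗ[ℂ] (Fin 3 → ℂ)) (ρ g).injective p = p := by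
  obtain ⟨v, hv, hev⟩ := common_eigenvector_aux G r hG ρ
  refine ⟨Projectivization.mk ℂ v hv, fun g => ?_⟩
  rw [Projectivization.map_mk]
  obtain ⟨c, hc⟩ := hev g
  rw [Projectivization.mk_eq_mk_iff']
  refine ⟨c, ?_⟩
  exact hc.symm
end

section
/- Let G be the dihedral group of order 8, let W be the 7-dimensional complex representation of G given by the sum-zero functions inside the left regular representation, and let Sym²W be its symmetric square with the induced G-action. Then the subspace of G-invariant elements of Sym²W, namely {x ∈ Sym²W : g • x = x for all g ∈ G}, has complex dimension 6. -/
open scoped TensorProduct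

set_option synthInstance.maxHeartbeats 1000000
set_option maxHeartbeats 1000000

/-- The left regular action of `g` on functions `DihedralGroup 4 → ℂ`:
`(reg g f) x = f (g⁻¹ * x)`. -/
noncomputable def reg (g : DihedralGroup 4) :
    (DihedralGroup 4 → ℂ) →ₗ[ℂ] (DihedralGroup 4 → ℂ) :=
  LinearMap.funLeft ℂ ℂ (fun x => g⁻¹ * x)

/-- The subspace of sum-zero functions: the regular representation minus the
trivial representation; it is 7-dimensional. -/
noncomputable def W : Submodule ℂ (DihedralGroup 4 → ℂ) :=
  LinearMap.ker (∑ x : DihedralGroup 4, LinearMap.proj x :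
    (DihedralGroup 4 → ℂ) →ₗ[ℂ] ℂ)

lemma reg_mem_W (g : DihedralGroup 4) {f : DihedralGroup 4 → ℂ} (hf : f ∈ W) :
    reg g f ∈ W := by
  simp only [W, LinearMap.mem_ker, LinearMap.sum_apply, LinearMap.proj_apply] at hf ⊢
  calc ∑ x : DihedralGroup 4, reg g f x
      = ∑ x : DihedralGroup 4, f x :=
        Fintype.sum_equiv (Equiv.mulLeft g⁻¹) _ _ (fun x => rfl)
    _ = 0 := hf

/-- The action of `g` on `W`. -/
noncomputable def regW (g : DihedralGroup 4) : W →ₗ[ℂ] W :=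
  (reg g).restrict (fun _ hf => reg_mem_W g hf)

noncomputable instance : AddCommGroup (↥W ⊗[ℂ] ↥W) := TensorProduct.addCommGroup

/-- The diagonal action of `g` on `W ⊗ W`. -/
noncomputable def tenAct (g : DihedralGroup 4) : (↥W ⊗[ℂ] ↥W) →ₗ[ℂ] (↥W ⊗[ℂ] ↥W) :=
  TensorProduct.map (regW g) (regW g)

/-- The subspace of `W ⊗ W` spanned by the elements `x ⊗ y - y ⊗ x`. -/
noncomputable def symRel : Submodule ℂ (↥W ⊗[ℂ] ↥W) :=
  Submodule.span ℂ {z | ∃ x y : W, z = x ⊗ₜ[ℂ] y - y ⊗ₜ[ℂ] x}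

/-- The symmetric square `Sym² W`: the quotient of `W ⊗ W` by the span of the
elements `x ⊗ y - y ⊗ x`. -/
noncomputable abbrev Sym2W : Type := (↥W ⊗[ℂ] ↥W) ⧸ symRel

lemma symRel_le (g : DihedralGroup 4) : symRel ≤ symRel.comap (tenAct g) := by
  rw [symRel, Submodule.span_le]
  rintro z ⟨x, y, rfl⟩
  simp only [Submodule.mem_comap, map_sub, tenAct, TensorProduct.map_tmul]
  exact Submodule.subset_span ⟨regW g x, regW g y, rfl⟩

/-- The induced action of `g` on `Sym² W`. -/
noncomputable def symAct (g : DihedralGroup 4) : Sym2W →ₗ[ℂ] Sym2W :=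
  Submodule.mapQ symRel symRel (tenAct g) (symRel_le g)

/-- The subspace of `G`-invariant elements of `Sym² W`. -/
noncomputable def invariants : Submodule ℂ Sym2W where
  carrier := {x | ∀ g : DihedralGroup 4, symAct g x = x}
  add_mem' := by
    intro a b ha hb g
    rw [map_add, ha g, hb g]
  zero_mem' := by
    intro g
    rw [map_zero]
  smul_mem' := by
    intro c a ha g
    rw [map_smul, ha g]


namespace Sym2Aux

/-! ### Trace of the regular action on `W` -/

noncomputable def sumF : (DihedralGroup 4 → ℂ) →ₗ[ℂ] ℂ :=
  (∑ x : DihedralGroup 4, LinearMap.proj x)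

noncomputable def pV : (DihedralGroup 4 → ℂ) →ₗ[ℂ] (DihedralGroup 4 → ℂ) :=
  LinearMap.id - LinearMap.smulRight sumF ((8:ℂ)⁻¹ • (1 : DihedralGroup 4 → ℂ))

lemma sumF_one : sumF (1 : DihedralGroup 4 → ℂ) = 8 := by
  simp [sumF, LinearMap.sum_apply, DihedralGroup.card]

lemma pV_mem_W (f : DihedralGroup 4 → ℂ) : pV f ∈ W := by
  have : sumF (pV f) = 0 := by
    simp only [pV, LinearMap.sub_apply, map_sub, LinearMap.id_apply,
      LinearMap.smulRight_apply, map_smul, sumF_one, smul_eq_mul]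
    ring
  simpa [W, sumF] using this

lemma pV_of_mem (f : DihedralGroup 4 → ℂ) (hf : f ∈ W) : pV f = f := by
  have h0 : sumF f = 0 := by simpa [W, sumF] using hf
  simp [pV, h0]

noncomputable def qV : (DihedralGroup 4 → ℂ) →ₗ[ℂ] W :=
  LinearMap.codRestrict W pV pV_mem_W

lemma regW_eq : ∀ g, regW g = qV ∘ₗ (reg g ∘ₗ W.subtype) := by
  intro g
  refine LinearMap.ext fun w => Subtype.ext ?_
  simp only [LinearMap.comp_apply, qV, LinearMap.codRestrict_apply, Submodule.coe_subtype]
  rw [pV_of_mem _ (reg_mem_W g w.2)]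
  rfl

lemma trace_regW (g : DihedralGroup 4) :
    LinearMap.trace ℂ W (regW g) = (if g = 1 then 8 else 0) - 1 := by
  rw [regW_eq, LinearMap.trace_comp_comm']
  have h1 : (reg g ∘ₗ W.subtype) ∘ₗ qV = reg g ∘ₗ pV := by
    rw [LinearMap.comp_assoc, qV, LinearMap.subtype_comp_codRestrict]
  rw [h1, LinearMap.trace_eq_matrix_trace ℂ (Pi.basisFun ℂ (DihedralGroup 4))]
  rw [Matrix.trace]
  have hdiag : ∀ x : DihedralGroup 4,
      (LinearMap.toMatrix (Pi.basisFun ℂ (DihedralGroup 4)) (Pi.basisFun ℂ (DihedralGroup 4))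
        (reg g ∘ₗ pV)).diag x = (if g = 1 then 1 else 0) - (8:ℂ)⁻¹ := by
    intro x
    have hx : g⁻¹ * x = x ↔ g = 1 := by
      constructor
      · intro h
        have := mul_right_cancel (b := x) (by simpa using h)
        simpa [inv_eq_one] using this
      · intro h; simp [h]
    have hsum : sumF (Pi.single x (1:ℂ)) = 1 := by
      simp [sumF, LinearMap.sum_apply, Pi.single_apply]
    have hps : pV (Pi.single x (1:ℂ)) = Pi.single x 1 - (8:ℂ)⁻¹ • 1 := by
      simp [pV, hsum]
    rw [Matrix.diag, LinearMap.toMatrix_apply, Pi.basisFun_repr, LinearMap.comp_apply,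
      Pi.basisFun_apply, hps]
    simp only [reg, LinearMap.funLeft_apply, Pi.sub_apply, Pi.smul_apply, Pi.one_apply,
      Pi.single_apply, hx]
    norm_num
  rw [Finset.sum_congr rfl (fun x _ => hdiag x)]
  rw [Finset.sum_sub_distrib, Finset.sum_const, Finset.sum_const, Finset.card_univ,
    DihedralGroup.card]
  by_cases h : g = 1 <;> simp [h] <;> norm_num

/-! ### A trace identity for the flip on a tensor square -/

lemma trace_map_comp_comm' {M : Type*} [AddCommGroup M] [Module ℂ M] [FiniteDimensional ℂ M]
    (f g : M →ₗ[ℂ] M) :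
    LinearMap.trace ℂ _ (TensorProduct.map f g ∘ₗ (TensorProduct.comm ℂ M M).toLinearMap)
      = LinearMap.trace ℂ _ (f ∘ₗ g) := by
  classical
  set b := Module.finBasis ℂ M with hb
  rw [LinearMap.trace_eq_matrix_trace ℂ (b.tensorProduct b),
      LinearMap.trace_eq_matrix_trace ℂ b, Matrix.trace, Matrix.trace]
  have hdiag : ∀ p : Fin (Module.finrank ℂ M) × Fin (Module.finrank ℂ M),
      (LinearMap.toMatrix (b.tensorProduct b) (b.tensorProduct b)
        (TensorProduct.map f g ∘ₗ (TensorProduct.comm ℂ M M).toLinearMap)).diag p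
      = LinearMap.toMatrix b b f p.1 p.2 * LinearMap.toMatrix b b g p.2 p.1 := by
    rintro ⟨i, j⟩
    rw [Matrix.diag, LinearMap.toMatrix_apply, Module.Basis.tensorProduct_apply']
    simp only [LinearMap.comp_apply, LinearEquiv.coe_coe, TensorProduct.comm_tmul,
      TensorProduct.map_tmul, Module.Basis.tensorProduct_repr_tmul_apply]
    rw [LinearMap.toMatrix_apply, LinearMap.toMatrix_apply]
    rw [smul_eq_mul]; ring
  rw [Finset.sum_congr rfl (fun p _ => hdiag p), Fintype.sum_prod_type]
  have hrhs : ∀ i, (LinearMap.toMatrix b b (f ∘ₗ g)).diag i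
      = ∑ j, LinearMap.toMatrix b b f i j * LinearMap.toMatrix b b g j i := by
    intro i
    rw [Matrix.diag, LinearMap.toMatrix_comp b b b, Matrix.mul_apply]
  rw [Finset.sum_congr rfl (fun i _ => hrhs i)]

/-! ### Group-action identities -/

lemma regW_mul (g h : DihedralGroup 4) : regW g ∘ₗ regW h = regW (g * h) := by
  refine LinearMap.ext fun w => Subtype.ext (funext fun x => ?_)
  show reg g (reg h (w : DihedralGroup 4 → ℂ)) x = reg (g * h) (w : DihedralGroup 4 → ℂ) x
  simp [reg, LinearMap.funLeft_apply, mul_inv_rev, mul_assoc]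

lemma regW_one : regW (1 : DihedralGroup 4) = LinearMap.id := by
  refine LinearMap.ext fun w => Subtype.ext (funext fun x => ?_)
  show reg 1 (w : DihedralGroup 4 → ℂ) x = (w : DihedralGroup 4 → ℂ) x
  simp [reg, LinearMap.funLeft_apply]

noncomputable def τ : (↥W ⊗[ℂ] ↥W) →ₗ[ℂ] (↥W ⊗[ℂ] ↥W) :=
  (TensorProduct.comm ℂ (↥W) (↥W)).toLinearMap

lemma τ_tmul (x y : W) : τ (x ⊗ₜ[ℂ] y) = y ⊗ₜ[ℂ] x := rfl

lemma τ_τ_apply (t : ↥W ⊗[ℂ] ↥W) : τ (τ t) = t := by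
  induction t using TensorProduct.induction_on with
  | zero => simp
  | tmul x y => rfl
  | add a b ha hb => rw [map_add, map_add, ha, hb]

lemma τ_tenAct_apply (g : DihedralGroup 4) (t : ↥W ⊗[ℂ] ↥W) :
    τ (tenAct g t) = tenAct g (τ t) := by
  induction t using TensorProduct.induction_on with
  | zero => simp
  | tmul x y => simp [τ, tenAct, TensorProduct.map_tmul]
  | add a b ha hb => rw [map_add, map_add, map_add, map_add, ha, hb]

lemma tenAct_mul_apply (g h : DihedralGroup 4) (t : ↥W ⊗[ℂ] ↥W) :
    tenAct g (tenAct h t) = tenAct (g * h) t := by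
  have : tenAct g ∘ₗ tenAct h = tenAct (g * h) := by
    rw [tenAct, tenAct, tenAct, ← TensorProduct.map_comp, regW_mul]
  exact LinearMap.congr_fun this t

/-! ### The invariant subspace of `W ⊗ W` and the averaging projector -/

noncomputable def F : Submodule ℂ (↥W ⊗[ℂ] ↥W) where
  carrier := {x | τ x = x ∧ ∀ g : DihedralGroup 4, tenAct g x = x}
  add_mem' := by
    rintro a b ⟨ha1, ha2⟩ ⟨hb1, hb2⟩
    exact ⟨by rw [map_add, ha1, hb1], fun g => by rw [map_add, ha2 g, hb2 g]⟩
  zero_mem' := ⟨map_zero _, fun g => map_zero _⟩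
  smul_mem' := by
    rintro c a ⟨ha1, ha2⟩
    exact ⟨by rw [map_smul, ha1], fun g => by rw [map_smul, ha2 g]⟩

lemma mem_F_iff (x : ↥W ⊗[ℂ] ↥W) :
    x ∈ F ↔ τ x = x ∧ ∀ g : DihedralGroup 4, tenAct g x = x := Iff.rfl

noncomputable def Pav : (↥W ⊗[ℂ] ↥W) →ₗ[ℂ] (↥W ⊗[ℂ] ↥W) :=
  (16:ℂ)⁻¹ • ∑ g : DihedralGroup 4, (tenAct g + tenAct g ∘ₗ τ)

lemma Pav_apply (x : ↥W ⊗[ℂ] ↥W) :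
    Pav x = (16:ℂ)⁻¹ • ∑ g : DihedralGroup 4, (tenAct g x + tenAct g (τ x)) := by
  simp [Pav, LinearMap.sum_apply]

lemma isProj_Pav : LinearMap.IsProj F Pav := by
  constructor
  · intro x
    rw [mem_F_iff]
    constructor
    · rw [Pav_apply, map_smul, map_sum]
      congr 1
      refine Finset.sum_congr rfl fun g _ => ?_
      rw [map_add, τ_tenAct_apply, τ_tenAct_apply, τ_τ_apply, add_comm]
    · intro h
      rw [Pav_apply, map_smul, map_sum]
      congr 1
      refine Fintype.sum_equiv (Equiv.mulLeft h) _ _ fun g => ?_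
      rw [map_add, tenAct_mul_apply, tenAct_mul_apply, Equiv.coe_mulLeft]
  · rintro x ⟨hτ, hG⟩
    rw [Pav_apply, hτ]
    have hterm : ∀ g : DihedralGroup 4, tenAct g x + tenAct g x = x + x :=
      fun g => by rw [hG g]
    rw [Finset.sum_congr rfl (fun g _ => hterm g), Finset.sum_const, Finset.card_univ,
      DihedralGroup.card, ← Nat.cast_smul_eq_nsmul ℂ, smul_smul, ← two_smul ℂ x, smul_smul]
    norm_num

lemma finrank_F : Module.finrank ℂ F = 6 := by
  have hproj := isProj_Pav.trace
  have h1 : ∀ g : DihedralGroup 4, LinearMap.trace ℂ _ (tenAct g)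
      = ((if g = 1 then (8:ℂ) else 0) - 1) * ((if g = 1 then 8 else 0) - 1) := by
    intro g
    rw [tenAct, LinearMap.trace_tensorProduct', trace_regW]
  have h2 : ∀ g : DihedralGroup 4, LinearMap.trace ℂ _ (tenAct g ∘ₗ τ)
      = (if g * g = 1 then (8:ℂ) else 0) - 1 := by
    intro g
    rw [tenAct, τ, trace_map_comp_comm', regW_mul, trace_regW]
  have htr : LinearMap.trace ℂ _ Pav = 6 := by
    rw [Pav, map_smul, map_sum]
    have : ∀ g : DihedralGroup 4,
        LinearMap.trace ℂ _ (tenAct g + tenAct g ∘ₗ τ)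
        = (((if g = 1 then (8:ℂ) else 0) - 1) * ((if g = 1 then 8 else 0) - 1))
          + ((if g * g = 1 then (8:ℂ) else 0) - 1) := by
      intro g
      rw [map_add, h1 g, h2 g]
    rw [Finset.sum_congr rfl (fun g _ => this g), Finset.sum_add_distrib]
    have hs1 : ∑ g : DihedralGroup 4,
        (((if g = 1 then (8:ℂ) else 0) - 1) * ((if g = 1 then 8 else 0) - 1)) = 56 := by
      have he : ∀ g : DihedralGroup 4,
          ((if g = 1 then (8:ℂ) else 0) - 1) * ((if g = 1 then 8 else 0) - 1)
          = (if g = 1 then (48:ℂ) else 0) + 1 := by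
        intro g; by_cases h : g = 1 <;> simp [h] <;> norm_num
      rw [Finset.sum_congr rfl (fun g _ => he g), Finset.sum_add_distrib,
        Finset.sum_ite_eq' Finset.univ (1 : DihedralGroup 4) (fun _ => (48:ℂ)),
        Finset.sum_const, Finset.card_univ, DihedralGroup.card]
      norm_num
    have hs2 : ∑ g : DihedralGroup 4, ((if g * g = 1 then (8:ℂ) else 0) - 1) = 40 := by
      rw [Finset.sum_sub_distrib, Finset.sum_const, Finset.card_univ, DihedralGroup.card,
        ← Finset.sum_filter]
      have hc : (Finset.univ.filter (fun g : DihedralGroup 4 => g * g = 1)).card = 6 := by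
        decide
      rw [Finset.sum_const, hc]
      norm_num
    rw [hs1, hs2]
    norm_num
  rw [htr] at hproj
  exact_mod_cast hproj.symm

/-! ### `invariants` is isomorphic to `F` -/

noncomputable def p2 : (↥W ⊗[ℂ] ↥W) →ₗ[ℂ] (↥W ⊗[ℂ] ↥W) :=
  (2:ℂ)⁻¹ • (LinearMap.id + τ)

lemma p2_apply (t : ↥W ⊗[ℂ] ↥W) : p2 t = (2:ℂ)⁻¹ • (t + τ t) := rfl

lemma symRel_le_ker : symRel ≤ LinearMap.ker p2 := by
  rw [symRel, Submodule.span_le]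
  rintro z ⟨x, y, rfl⟩
  rw [SetLike.mem_coe, LinearMap.mem_ker, p2_apply, map_sub, τ_tmul, τ_tmul]
  rw [show (x ⊗ₜ[ℂ] y - y ⊗ₜ[ℂ] x) + (y ⊗ₜ[ℂ] x - x ⊗ₜ[ℂ] y) = 0 by abel, smul_zero]

noncomputable def φ : Sym2W →ₗ[ℂ] (↥W ⊗[ℂ] ↥W) := symRel.liftQ p2 symRel_le_ker

lemma φ_mk (t : ↥W ⊗[ℂ] ↥W) : φ (Submodule.Quotient.mk t) = p2 t := rfl

lemma sub_τ_mem (t : ↥W ⊗[ℂ] ↥W) : t - τ t ∈ symRel := by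
  induction t using TensorProduct.induction_on with
  | zero => simp
  | tmul x y => exact Submodule.subset_span ⟨x, y, by rw [τ_tmul]⟩
  | add a b ha hb =>
    have h : (a + b) - τ (a + b) = (a - τ a) + (b - τ b) := by rw [map_add]; abel
    rw [h]; exact add_mem ha hb

lemma φ_inj : Function.Injective φ := by
  rw [← LinearMap.ker_eq_bot, Submodule.eq_bot_iff]
  intro u hu
  obtain ⟨t, rfl⟩ := Submodule.Quotient.mk_surjective _ u
  rw [LinearMap.mem_ker, φ_mk] at hu
  have ht : t ∈ symRel := by
    have h2 : t - p2 t = (2:ℂ)⁻¹ • (t - τ t) := by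
      rw [p2_apply]
      module
    have := Submodule.smul_mem symRel ((2:ℂ)⁻¹) (sub_τ_mem t)
    rw [← h2, hu, sub_zero] at this
    exact this
  simpa [Submodule.Quotient.mk_eq_zero] using ht

lemma p2_comm (g : DihedralGroup 4) (t : ↥W ⊗[ℂ] ↥W) :
    p2 (tenAct g t) = tenAct g (p2 t) := by
  rw [p2_apply, p2_apply, map_smul, map_add, τ_tenAct_apply]

lemma φ_symAct (g : DihedralGroup 4) (u : Sym2W) :
    φ (symAct g u) = tenAct g (φ u) := by
  obtain ⟨t, rfl⟩ := Submodule.Quotient.mk_surjective _ u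
  rw [symAct, Submodule.mapQ_apply, φ_mk, φ_mk, p2_comm]

lemma τ_φ (u : Sym2W) : τ (φ u) = φ u := by
  obtain ⟨t, rfl⟩ := Submodule.Quotient.mk_surjective _ u
  rw [φ_mk, p2_apply, map_smul, map_add, τ_τ_apply, add_comm]

lemma map_invariants : Submodule.map φ invariants = F := by
  apply le_antisymm
  · rintro x ⟨u, hu, rfl⟩
    rw [mem_F_iff]
    exact ⟨τ_φ u, fun g => by rw [← φ_symAct, hu g]⟩
  · rintro x ⟨hτ, hG⟩
    refine ⟨Submodule.Quotient.mk x, fun g => ?_, ?_⟩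
    · show symAct g (Submodule.Quotient.mk x) = Submodule.Quotient.mk x
      rw [symAct, Submodule.mapQ_apply, hG g]
    · rw [φ_mk, p2_apply, hτ, ← two_smul ℂ x, smul_smul]
      norm_num

noncomputable def invariantsEquivF : invariants ≃ₗ[ℂ] F :=
  (Submodule.equivMapOfInjective φ φ_inj invariants).trans (LinearEquiv.ofEq _ _ map_invariants)

end Sym2Aux

/-- For `G` the dihedral group of order 8 and `W` the 7-dimensional sum-zero
subrepresentation of its complex regular representation, the space of
`G`-invariants of `Sym² W` has dimension 6. -/
theorem finrank_invariants_sym2_eq_six : Module.finrank ℂ invariants = 6 := by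
  rw [Sym2Aux.invariantsEquivF.finrank_eq, Sym2Aux.finrank_F]
end

section
/- Let G be the dihedral group of order 8, W the 7-dimensional sum-zero subrepresentation of its complex left regular representation, Sym²W its symmetric square, and χ₂ : G → ℂ the character with χ₂(r^i) = (−1)^i and χ₂(s r^i) = (−1)^i. Then the complex vector space of linear maps f : Sym²W → ℂ satisfying f(g • x) = χ₂(g) · f(x) for all g ∈ G and x ∈ Sym²W has dimension 4. -/
open scoped TensorProduct

set_option synthInstance.maxHeartbeats 1000000
set_option maxHeartbeats 1000000

/-- The space of `χ`-equivariant linear functionals on `Sym² W`. -/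
noncomputable def eqMaps (χ : DihedralGroup 4 → ℂ) : Submodule ℂ (Sym2W →ₗ[ℂ] ℂ) where
  carrier := {f | ∀ (g : DihedralGroup 4) (x : Sym2W), f (symAct g x) = χ g * f x}
  add_mem' := by
    intro a b ha hb g x
    simp only [LinearMap.add_apply, ha g x, hb g x]
    ring
  zero_mem' := by
    intro g x
    simp
  smul_mem' := by
    intro c f hf g x
    simp only [LinearMap.smul_apply, hf g x, smul_eq_mul]
    ring

/-- The character of `DihedralGroup 4` with `χ₂(r^i) = (-1)^i` and
`χ₂(s r^i) = (-1)^i`. -/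
noncomputable def chi2 : DihedralGroup 4 → ℂ
  | .r i => (-1) ^ i.val
  | .sr i => (-1) ^ i.val


open DihedralGroup

lemma neg_pow_par {a b : ℕ} (h : a % 2 = b % 2) : ((-1:ℂ))^a = (-1)^b := by
  rcases Nat.even_or_odd a with ha | ha
  · have ha' := Nat.even_iff.1 ha
    rw [ha.neg_one_pow, (Nat.even_iff.2 (by omega : b % 2 = 0)).neg_one_pow]
  · have ha' := Nat.odd_iff.1 ha
    rw [ha.neg_one_pow, (Nat.odd_iff.2 (by omega : b % 2 = 1)).neg_one_pow]

lemma chi2_mul (g h : DihedralGroup 4) : chi2 (g * h) = chi2 g * chi2 h := by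
  have key : ∀ i j : ZMod 4, ((-1:ℂ))^(i+j).val = (-1)^i.val * (-1)^j.val := by
    intro i j
    rw [← pow_add]
    exact neg_pow_par (by revert i j; decide)
  have key2 : ∀ i j : ZMod 4, ((-1:ℂ))^(j-i).val = (-1)^i.val * (-1)^j.val := by
    intro i j
    rw [← pow_add]
    exact neg_pow_par (by revert i j; decide)
  rcases g with i | i <;> rcases h with j | j <;>
    simp [r_mul_r, r_mul_sr, sr_mul_r, sr_mul_sr, chi2, key, key2]

lemma chi2_one : chi2 1 = 1 := rfl

lemma delta_sum (y : DihedralGroup 4) :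
    ∑ x : DihedralGroup 4, ((if y = x then (1:ℂ) else 0) - 1/8) = 0 := by
  rw [Finset.sum_sub_distrib, Finset.sum_ite_eq, Finset.sum_const, Finset.card_univ,
    DihedralGroup.card]
  norm_num

lemma mem_W_iff (f : DihedralGroup 4 → ℂ) :
    f ∈ W ↔ ∑ x : DihedralGroup 4, f x = 0 := by
  simp [W, LinearMap.mem_ker]

/-- The vector `δ_x - 1/8` in `W`. -/
noncomputable def vW (x : DihedralGroup 4) : W :=
  ⟨fun y => (if y = x then 1 else 0) - 1/8, by
    rw [mem_W_iff]
    calc ∑ y : DihedralGroup 4, ((if y = x then (1:ℂ) else 0) - 1/8)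
        = ∑ y : DihedralGroup 4, ((if x = y then (1:ℂ) else 0) - 1/8) := by
          exact Finset.sum_congr rfl fun y _ =>
            congrArg (· - 1/8) (if_congr eq_comm rfl rfl)
      _ = 0 := delta_sum x⟩

lemma vW_apply (x y : DihedralGroup 4) :
    (vW x : DihedralGroup 4 → ℂ) y = (if y = x then 1 else 0) - 1/8 := rfl

lemma regW_vW (g x : DihedralGroup 4) : regW g (vW x) = vW (g * x) := by
  apply Subtype.ext
  funext y
  show (vW x : DihedralGroup 4 → ℂ) (g⁻¹ * y) = _
  rw [vW_apply, vW_apply]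
  congr 1
  congr 1
  exact propext inv_mul_eq_iff_eq_mul

lemma sum_vW : ∑ x : DihedralGroup 4, vW x = 0 := by
  apply Subtype.ext
  rw [Submodule.coe_sum]
  funext y
  show ∑ x : DihedralGroup 4, ((if y = x then (1:ℂ) else 0) - 1/8) = 0
  exact delta_sum y

lemma W_eq_sum (w : W) : w = ∑ x : DihedralGroup 4, (w : DihedralGroup 4 → ℂ) x • vW x := by
  apply Subtype.ext
  rw [Submodule.coe_sum]
  funext y
  have hw := (mem_W_iff _).1 w.2
  calc (w : DihedralGroup 4 → ℂ) y
      = ∑ x : DihedralGroup 4, (w : DihedralGroup 4 → ℂ) x * ((if y = x then 1 else 0) - 1/8) := by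
        simp only [mul_sub, Finset.sum_sub_distrib, mul_ite, mul_one, mul_zero]
        rw [Finset.sum_ite_eq, ← Finset.sum_mul, hw, zero_mul, sub_zero]
        simp
    _ = ∑ x : DihedralGroup 4, ((w : DihedralGroup 4 → ℂ) x • vW x : W).1 y := rfl

lemma apply_mk_tmul (F : Sym2W →ₗ[ℂ] ℂ) (w1 w2 : W) :
    F (Submodule.Quotient.mk (w1 ⊗ₜ[ℂ] w2)) =
      ∑ x : DihedralGroup 4, ∑ y : DihedralGroup 4,
        (w1 : DihedralGroup 4 → ℂ) x * (w2 : DihedralGroup 4 → ℂ) y *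
          F (Submodule.Quotient.mk (vW x ⊗ₜ[ℂ] vW y)) := by
  conv_lhs => rw [W_eq_sum w1, W_eq_sum w2]
  rw [← Submodule.mkQ_apply, TensorProduct.sum_tmul]
  simp only [TensorProduct.tmul_sum, map_sum, TensorProduct.smul_tmul_smul, map_smul,
    smul_eq_mul, Submodule.mkQ_apply]

lemma sym2_ext {F1 F2 : Sym2W →ₗ[ℂ] ℂ}
    (h : ∀ x y : DihedralGroup 4,
      F1 (Submodule.Quotient.mk (vW x ⊗ₜ[ℂ] vW y)) =
      F2 (Submodule.Quotient.mk (vW x ⊗ₜ[ℂ] vW y))) : F1 = F2 := by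
  apply Submodule.linearMap_qext
  apply TensorProduct.ext'
  intro w1 w2
  show F1 (Submodule.Quotient.mk (w1 ⊗ₜ[ℂ] w2)) = F2 (Submodule.Quotient.mk (w1 ⊗ₜ[ℂ] w2))
  rw [apply_mk_tmul, apply_mk_tmul]
  exact Finset.sum_congr rfl fun x _ => Finset.sum_congr rfl fun y _ => by rw [h]

lemma symAct_mk (g : DihedralGroup 4) (w1 w2 : W) :
    symAct g (Submodule.Quotient.mk (w1 ⊗ₜ[ℂ] w2)) =
      Submodule.Quotient.mk (regW g w1 ⊗ₜ[ℂ] regW g w2) := by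
  rw [symAct, Submodule.mapQ_apply]
  congr 1

lemma mk_tmul_comm (a b : W) :
    (Submodule.Quotient.mk (a ⊗ₜ[ℂ] b) : Sym2W) = Submodule.Quotient.mk (b ⊗ₜ[ℂ] a) :=
  (Submodule.Quotient.eq _).2 (Submodule.subset_span ⟨a, b, rfl⟩)


/-- The matrix entry of the bilinear form attached to `m`. -/
noncomputable def Mm (m : DihedralGroup 4 → ℂ) (x y : DihedralGroup 4) : ℂ :=
  chi2 x * m (x⁻¹ * y)

lemma Mm_symm {m : DihedralGroup 4 → ℂ} (hm : ∀ t, m t = chi2 t * m t⁻¹)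
    (x y : DihedralGroup 4) : Mm m x y = Mm m y x := by
  unfold Mm
  rw [hm (x⁻¹ * y), ← mul_assoc, ← chi2_mul]
  simp [mul_inv_rev]

lemma Mm_equiv (m : DihedralGroup 4 → ℂ) (g x y : DihedralGroup 4) :
    Mm m (g * x) (g * y) = chi2 g * Mm m x y := by
  unfold Mm
  rw [chi2_mul]
  have : (g * x)⁻¹ * (g * y) = x⁻¹ * y := by group
  rw [this, mul_assoc]

lemma Mm_row {m : DihedralGroup 4 → ℂ} (hsum : ∑ t : DihedralGroup 4, m t = 0)
    (x : DihedralGroup 4) : ∑ y : DihedralGroup 4, Mm m x y = 0 := by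
  unfold Mm
  rw [← Finset.mul_sum]
  have : ∑ y : DihedralGroup 4, m (x⁻¹ * y) = ∑ t : DihedralGroup 4, m t :=
    Fintype.sum_equiv (Equiv.mulLeft x⁻¹) _ _ (fun y => rfl)
  rw [this, hsum, mul_zero]

lemma Mm_col {m : DihedralGroup 4 → ℂ} (hm : ∀ t, m t = chi2 t * m t⁻¹)
    (hsum : ∑ t : DihedralGroup 4, m t = 0) (y : DihedralGroup 4) :
    ∑ x : DihedralGroup 4, Mm m x y = 0 := by
  calc ∑ x : DihedralGroup 4, Mm m x y = ∑ x : DihedralGroup 4, Mm m y x :=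
        Finset.sum_congr rfl fun x _ => Mm_symm hm x y
    _ = 0 := Mm_row hsum y

/-- The bilinear form on `W` attached to `m`. -/
noncomputable def Bm (m : DihedralGroup 4 → ℂ) : W →ₗ[ℂ] W →ₗ[ℂ] ℂ :=
  LinearMap.mk₂ ℂ
    (fun w1 w2 => ∑ x : DihedralGroup 4, ∑ y : DihedralGroup 4,
      (w1 : DihedralGroup 4 → ℂ) x * (w2 : DihedralGroup 4 → ℂ) y * Mm m x y)
    (by intro w1 w1' w2
        rw [← Finset.sum_add_distrib]
        refine Finset.sum_congr rfl fun x _ => ?_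
        rw [← Finset.sum_add_distrib]
        refine Finset.sum_congr rfl fun y _ => ?_
        show ((w1 : DihedralGroup 4 → ℂ) x + (w1' : DihedralGroup 4 → ℂ) x) * _ * _ = _
        ring)
    (by intro c w1 w2
        simp only [smul_eq_mul, Submodule.coe_smul, Pi.smul_apply, Finset.mul_sum]
        exact Finset.sum_congr rfl fun x _ => Finset.sum_congr rfl fun y _ => by ring)
    (by intro w1 w2 w2'
        rw [← Finset.sum_add_distrib]
        refine Finset.sum_congr rfl fun x _ => ?_
        rw [← Finset.sum_add_distrib]
        refine Finset.sum_congr rfl fun y _ => ?_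
        show _ * ((w2 : DihedralGroup 4 → ℂ) y + (w2' : DihedralGroup 4 → ℂ) y) * _ = _
        ring)
    (by intro c w1 w2
        simp only [smul_eq_mul, Submodule.coe_smul, Pi.smul_apply, Finset.mul_sum]
        exact Finset.sum_congr rfl fun x _ => Finset.sum_congr rfl fun y _ => by ring)

lemma Bm_apply (m : DihedralGroup 4 → ℂ) (w1 w2 : W) :
    Bm m w1 w2 = ∑ x : DihedralGroup 4, ∑ y : DihedralGroup 4,
      (w1 : DihedralGroup 4 → ℂ) x * (w2 : DihedralGroup 4 → ℂ) y * Mm m x y := rfl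

lemma Bm_symm {m : DihedralGroup 4 → ℂ} (hm : ∀ t, m t = chi2 t * m t⁻¹) (w1 w2 : W) :
    Bm m w1 w2 = Bm m w2 w1 := by
  rw [Bm_apply, Bm_apply, Finset.sum_comm]
  refine Finset.sum_congr rfl fun x _ => Finset.sum_congr rfl fun y _ => ?_
  rw [Mm_symm hm]
  ring

/-- The functional on `Sym² W` attached to `m`. -/
noncomputable def Fm (m : DihedralGroup 4 → ℂ) (hm : ∀ t, m t = chi2 t * m t⁻¹) :
    Sym2W →ₗ[ℂ] ℂ :=
  Submodule.liftQ symRel (TensorProduct.lift (Bm m)) (by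
    rw [symRel, Submodule.span_le]
    rintro z ⟨a, b, rfl⟩
    simp only [SetLike.mem_coe, LinearMap.mem_ker, map_sub, TensorProduct.lift.tmul]
    rw [Bm_symm hm a b, sub_self])

lemma Fm_mk_vW {m : DihedralGroup 4 → ℂ} (hm : ∀ t, m t = chi2 t * m t⁻¹)
    (hsum : ∑ t : DihedralGroup 4, m t = 0) (x y : DihedralGroup 4) :
    Fm m hm (Submodule.Quotient.mk (vW x ⊗ₜ[ℂ] vW y)) = Mm m x y := by
  rw [Fm, Submodule.liftQ_apply, TensorProduct.lift.tmul, Bm_apply]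
  have inner : ∀ u : DihedralGroup 4,
      ∑ w : DihedralGroup 4, (vW y : DihedralGroup 4 → ℂ) w * Mm m u w = Mm m u y := by
    intro u
    simp only [vW_apply, sub_mul, ite_mul, one_mul, zero_mul]
    rw [Finset.sum_sub_distrib, Finset.sum_ite_eq' Finset.univ y (Mm m u),
      ← Finset.mul_sum, Mm_row hsum, mul_zero, sub_zero, if_pos (Finset.mem_univ y)]
  calc ∑ u : DihedralGroup 4, ∑ w : DihedralGroup 4,
        (vW x : DihedralGroup 4 → ℂ) u * (vW y : DihedralGroup 4 → ℂ) w * Mm m u w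
      = ∑ u : DihedralGroup 4, (vW x : DihedralGroup 4 → ℂ) u * Mm m u y := by
        refine Finset.sum_congr rfl fun u _ => ?_
        rw [← inner u, Finset.mul_sum]
        exact Finset.sum_congr rfl fun w _ => mul_assoc _ _ _
    _ = Mm m x y := by
        simp only [vW_apply, sub_mul, ite_mul, one_mul, zero_mul]
        rw [Finset.sum_sub_distrib, Finset.sum_ite_eq' Finset.univ x (fun u => Mm m u y),
          ← Finset.mul_sum, Mm_col hm hsum, mul_zero, sub_zero, if_pos (Finset.mem_univ x)]

lemma Fm_mem {m : DihedralGroup 4 → ℂ} (hm : ∀ t, m t = chi2 t * m t⁻¹)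
    (hsum : ∑ t : DihedralGroup 4, m t = 0) : Fm m hm ∈ eqMaps chi2 := by
  intro g z
  have key : (Fm m hm).comp (symAct g) = chi2 g • Fm m hm := by
    apply sym2_ext
    intro x y
    rw [LinearMap.comp_apply, symAct_mk, regW_vW, regW_vW, LinearMap.smul_apply,
      Fm_mk_vW hm hsum, Fm_mk_vW hm hsum, Mm_equiv, smul_eq_mul]
  have := LinearMap.congr_fun key z
  rwa [LinearMap.comp_apply, LinearMap.smul_apply, smul_eq_mul] at this


lemma zmod4_cases (i : ZMod 4) : i = 0 ∨ i = 1 ∨ i = 2 ∨ i = 3 := by revert i; decide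

lemma inv_r (i : ZMod 4) : (r i : DihedralGroup 4)⁻¹ = r (-i) := rfl
lemma inv_sr (i : ZMod 4) : (sr i : DihedralGroup 4)⁻¹ = sr i := rfl

/-- An explicit enumeration of the dihedral group. -/
def dEquiv : ZMod 4 ⊕ ZMod 4 ≃ DihedralGroup 4 where
  toFun := Sum.elim r sr
  invFun := fun g => match g with | .r i => .inl i | .sr i => .inr i
  left_inv := by rintro (i | i) <;> rfl
  right_inv := by rintro (i | i) <;> rfl

/-- Sum over the dihedral group, written out. -/
lemma sumG (F : DihedralGroup 4 → ℂ) :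
    ∑ x : DihedralGroup 4, F x =
      F (r 0) + F (r 1) + F (r 2) + F (r 3) +
      (F (sr 0) + F (sr 1) + F (sr 2) + F (sr 3)) := by
  rw [← Equiv.sum_comp dEquiv F, Fintype.sum_sum_type]
  have hz : ∀ f : ZMod 4 → ℂ, ∑ i : ZMod 4, f i = f 0 + f 1 + f 2 + f 3 := by
    intro f
    rw [show (Finset.univ : Finset (ZMod 4)) = {0, 1, 2, 3} from by decide,
      Finset.sum_insert (by decide), Finset.sum_insert (by decide),
      Finset.sum_insert (by decide), Finset.sum_singleton]
    ring
  rw [hz, hz]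
  rfl

/-- The four-parameter family of class-function data. -/
noncomputable def mC (c : Fin 4 → ℂ) : DihedralGroup 4 → ℂ
  | .r i => if i = 0 then c 0 else if i = 1 then c 1 else if i = 2 then c 2 else -c 1
  | .sr i => if i = 0 then c 3 else if i = 2 then -(c 0 + c 2 + c 3) else 0

lemma hm_mC (c : Fin 4 → ℂ) : ∀ t, mC c t = chi2 t * mC c t⁻¹ := by
  intro t
  rcases t with i | i <;> rcases zmod4_cases i with rfl | rfl | rfl | rfl <;>
    simp (config := { decide := true }) [mC, chi2, _root_.inv_r, _root_.inv_sr, -r_zero,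
      show ((-0 : ZMod 4)) = 0 from rfl, show ((-1 : ZMod 4)) = 3 from rfl,
      show ((-2 : ZMod 4)) = 2 from rfl, show ((-3 : ZMod 4)) = 1 from rfl]

lemma hsum_mC (c : Fin 4 → ℂ) : ∑ t : DihedralGroup 4, mC c t = 0 := by
  rw [sumG]
  simp (config := { decide := true }) [mC]
  ring

lemma mC_add (c c' : Fin 4 → ℂ) (t : DihedralGroup 4) :
    mC (c + c') t = mC c t + mC c' t := by
  rcases t with i | i <;> simp [mC] <;> split_ifs <;> ring

lemma mC_smul (a : ℂ) (c : Fin 4 → ℂ) (t : DihedralGroup 4) :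
    mC (a • c) t = a * mC c t := by
  rcases t with i | i <;> simp only [mC, Pi.smul_apply, smul_eq_mul] <;> split_ifs <;> ring

/-- Evaluation points. -/
noncomputable def KK (t : DihedralGroup 4) : Sym2W :=
  Submodule.Quotient.mk (vW 1 ⊗ₜ[ℂ] vW t)

noncomputable def tsel : Fin 4 → DihedralGroup 4 := ![1, r 1, r 2, sr 0]

noncomputable def fwd : (Fin 4 → ℂ) →ₗ[ℂ] eqMaps chi2 where
  toFun c := ⟨Fm (mC c) (hm_mC c), Fm_mem (hm_mC c) (hsum_mC c)⟩
  map_add' c c' := by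
    apply Subtype.ext
    rw [Submodule.coe_add]
    apply sym2_ext
    intro x y
    rw [LinearMap.add_apply, Fm_mk_vW _ (hsum_mC _), Fm_mk_vW _ (hsum_mC _),
      Fm_mk_vW _ (hsum_mC _)]
    unfold Mm
    rw [mC_add]
    ring
  map_smul' a c := by
    apply Subtype.ext
    rw [RingHom.id_apply, Submodule.coe_smul]
    apply sym2_ext
    intro x y
    rw [LinearMap.smul_apply, Fm_mk_vW _ (hsum_mC _), Fm_mk_vW _ (hsum_mC _), smul_eq_mul]
    unfold Mm
    rw [mC_smul]
    ring

noncomputable def bwd : eqMaps chi2 →ₗ[ℂ] (Fin 4 → ℂ) :=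
  LinearMap.pi fun j => (LinearMap.applyₗ (KK (tsel j))).comp (eqMaps chi2).subtype

lemma bwd_apply (f : eqMaps chi2) (j : Fin 4) : bwd f j = (f : Sym2W →ₗ[ℂ] ℂ) (KK (tsel j)) :=
  rfl

lemma f_equivar (f : eqMaps chi2) (g : DihedralGroup 4) (z : Sym2W) :
    (f : Sym2W →ₗ[ℂ] ℂ) (symAct g z) = chi2 g * (f : Sym2W →ₗ[ℂ] ℂ) z :=
  f.2 g z

lemma f_mk_vW (f : eqMaps chi2) (x y : DihedralGroup 4) :
    (f : Sym2W →ₗ[ℂ] ℂ) (Submodule.Quotient.mk (vW x ⊗ₜ[ℂ] vW y)) =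
      chi2 x * (f : Sym2W →ₗ[ℂ] ℂ) (KK (x⁻¹ * y)) := by
  have := f_equivar f x (KK (x⁻¹ * y))
  rwa [KK, symAct_mk, regW_vW, regW_vW, mul_one, mul_inv_cancel_left] at this

lemma f_KK_inv (f : eqMaps chi2) (t : DihedralGroup 4) :
    (f : Sym2W →ₗ[ℂ] ℂ) (KK t⁻¹) = chi2 t⁻¹ * (f : Sym2W →ₗ[ℂ] ℂ) (KK t) := by
  have := f_equivar f t⁻¹ (KK t)
  rwa [KK, symAct_mk, regW_vW, regW_vW, mul_one, inv_mul_cancel, mk_tmul_comm, ← KK] at this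

lemma f_KK_sum (f : eqMaps chi2) :
    ∑ t : DihedralGroup 4, (f : Sym2W →ₗ[ℂ] ℂ) (KK t) = 0 := by
  rw [← map_sum]
  have : ∑ t : DihedralGroup 4, KK t = 0 := by
    unfold KK
    simp only [← Submodule.mkQ_apply, ← map_sum, ← TensorProduct.tmul_sum, sum_vW,
      TensorProduct.tmul_zero, map_zero]
  rw [this, map_zero]

lemma mC_bwd (f : eqMaps chi2) (t : DihedralGroup 4) :
    mC (bwd f) t = (f : Sym2W →ₗ[ℂ] ℂ) (KK t) := by
  have h3 : (f : Sym2W →ₗ[ℂ] ℂ) (KK (r 3)) = -((f : Sym2W →ₗ[ℂ] ℂ) (KK (r 1))) := by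
    have := f_KK_inv f (r 1)
    rw [_root_.inv_r, show ((-1 : ZMod 4)) = 3 from rfl] at this
    rw [this]
    norm_num [chi2, show ZMod.val (3 : ZMod 4) = 3 from rfl]
  have hs1 : (f : Sym2W →ₗ[ℂ] ℂ) (KK (sr 1)) = 0 := by
    have := f_KK_inv f (sr 1)
    rw [_root_.inv_sr] at this
    have h0 : chi2 ((sr 1 : DihedralGroup 4)⁻¹) = -1 := by
      norm_num [chi2, _root_.inv_sr, show ZMod.val (1 : ZMod 4) = 1 from rfl]
    rw [_root_.inv_sr] at h0
    rw [h0] at this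
    linear_combination this / 2
  have hs3 : (f : Sym2W →ₗ[ℂ] ℂ) (KK (sr 3)) = 0 := by
    have := f_KK_inv f (sr 3)
    rw [_root_.inv_sr] at this
    have h0 : chi2 ((sr 3 : DihedralGroup 4)⁻¹) = -1 := by
      norm_num [chi2, _root_.inv_sr, show ZMod.val (3 : ZMod 4) = 3 from rfl]
    rw [_root_.inv_sr] at h0
    rw [h0] at this
    linear_combination this / 2
  have hsum := f_KK_sum f
  rw [sumG] at hsum
  have h1 : KK (r 0) = KK (tsel 0) := by rw [show (tsel 0) = r 0 from one_def ▸ rfl]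
  rcases t with i | i <;> rcases zmod4_cases i with rfl | rfl | rfl | rfl
  · rw [show mC (bwd f) (r 0) = bwd f 0 from by simp (config := { decide := true }) [mC], bwd_apply, ← h1]
  · rw [show mC (bwd f) (r 1) = bwd f 1 from by simp (config := { decide := true }) [mC], bwd_apply]; rfl
  · rw [show mC (bwd f) (r 2) = bwd f 2 from by simp (config := { decide := true }) [mC], bwd_apply]; rfl
  · rw [show mC (bwd f) (r 3) = -(bwd f 1) from by simp (config := { decide := true }) [mC], bwd_apply, h3]; rfl
  · rw [show mC (bwd f) (sr 0) = bwd f 3 from by simp (config := { decide := true }) [mC], bwd_apply]; rfl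
  · rw [show mC (bwd f) (sr 1) = 0 from by simp (config := { decide := true }) [mC], hs1]
  · rw [show mC (bwd f) (sr 2) = -(bwd f 0 + bwd f 2 + bwd f 3) from by simp (config := { decide := true }) [mC],
      bwd_apply, bwd_apply, bwd_apply, ← h1, show (tsel 2) = r 2 from rfl,
      show (tsel 3) = sr 0 from rfl]
    rw [h3, hs1, hs3] at hsum
    linear_combination -hsum
  · rw [show mC (bwd f) (sr 3) = 0 from by simp (config := { decide := true }) [mC], hs3]

noncomputable def eqv : (Fin 4 → ℂ) ≃ₗ[ℂ] eqMaps chi2 :=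
  LinearEquiv.ofLinear fwd bwd
    (by
      refine LinearMap.ext fun f => ?_
      apply Subtype.ext
      apply sym2_ext
      intro x y
      show Fm (mC (bwd f)) (hm_mC _) (Submodule.Quotient.mk (vW x ⊗ₜ[ℂ] vW y)) = _
      rw [Fm_mk_vW _ (hsum_mC _)]
      unfold Mm
      rw [mC_bwd, f_mk_vW]
      rfl)
    (by
      refine LinearMap.ext fun c => funext fun j => ?_
      show Fm (mC c) (hm_mC c) (KK (tsel j)) = c j
      rw [KK, Fm_mk_vW _ (hsum_mC c)]
      unfold Mm
      rw [chi2_one, one_mul, inv_one, one_mul]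
      fin_cases j <;>
        simp (config := { decide := true }) [tsel, mC, one_def, -r_zero])

/-- The multiplicity of the character `χ₂` in `Sym² W` is 4. -/
theorem finrank_eqMaps_chi2_eq_four : Module.finrank ℂ (eqMaps chi2) = 4 := by
  rw [← eqv.finrank_eq, Module.finrank_fin_fun]
end
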